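/- Define n̂₁ = (1,0,0), n̂₂ = (0, 1/√5, −2/√5), n̂₃ = (0, 2/√5, 1/√5) in ℝ³. Then (n̂₁, n̂₂, n̂₃) is an orthonormal basis, and for every q ∈ ℝ², writing φⱼ = F(q) · n̂ⱼ with F(q) = (F₁(q), F₂(q), F₃(q)), one has φ₃ = (φ₁² − 4)/√5. -/

import Mathlib

open Real

noncomputable def Fvec (q : ℝ × ℝ) : ℝ × ℝ × ℝ :=
  (2 * Real.cos q.1 + 2 * Real.cos q.2,
   2 * Real.cos (q.1 - q.2) + 2 * Real.cos (q.1 + q.2),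
   2 * Real.cos (2 * q.1) + 2 * Real.cos (2 * q.2))

def dot3 (K F : ℝ × ℝ × ℝ) : ℝ := K.1 * F.1 + K.2.1 * F.2.1 + K.2.2 * F.2.2

noncomputable def n1 : ℝ × ℝ × ℝ := (1, 0, 0)
noncomputable def n2 : ℝ × ℝ × ℝ := (0, 1 / Real.sqrt 5, -2 / Real.sqrt 5)
noncomputable def n3 : ℝ × ℝ × ℝ := (0, 2 / Real.sqrt 5, 1 / Real.sqrt 5)

theorem natural_frame :
    (dot3 n1 n1 = 1 ∧ dot3 n2 n2 = 1 ∧ dot3 n3 n3 = 1 ∧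
     dot3 n1 n2 = 0 ∧ dot3 n1 n3 = 0 ∧ dot3 n2 n3 = 0) ∧
    ∀ q : ℝ × ℝ,
      dot3 (Fvec q) n3 = ((dot3 (Fvec q) n1) ^ 2 - 4) / Real.sqrt 5 := by
  have h5 : Real.sqrt 5 ≠ 0 := by positivity
  have hsq : Real.sqrt 5 * Real.sqrt 5 = 5 := Real.mul_self_sqrt (by norm_num)
  constructor
  · refine ⟨by simp [dot3, n1], ?_, ?_, by simp [dot3, n1, n2], by simp [dot3, n1, n3], ?_⟩
    · simp only [dot3, n2]
      field_simp
      linarith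
    · simp only [dot3, n3]
      field_simp
      linarith
    · simp only [dot3, n2, n3]
      field_simp
      ring
  · intro q
    simp only [dot3, Fvec, n1, n3]
    rw [Real.cos_sub, Real.cos_add, Real.cos_two_mul q.1, Real.cos_two_mul q.2]
    field_simp
    ring
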